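/- For all integers a, b with a ≠ b, the graph distance in the combinatorial horoball over ℤ between the base vertices (a, 0) and (b, 0) satisfies d_G((a, 0), (b, 0)) ≥ 2·log|a − b| − 2 (natural logarithm). -/

import Mathlib

/-- The combinatorial horoball over `ℤ`: vertices `ℤ × ℕ`; `(x, n)` and `(y, n)` are adjacent
whenever `0 < |x - y| ≤ exp n`, and `(x, n)` is adjacent to `(x, n + 1)`. -/
def ZHoroball : SimpleGraph (ℤ × ℕ) where
  Adj u v :=
    (u.2 = v.2 ∧ 0 < |u.1 - v.1| ∧ ((|u.1 - v.1| : ℤ) : ℝ) ≤ Real.exp u.2) ∨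
    (u.1 = v.1 ∧ (u.2 = v.2 + 1 ∨ v.2 = u.2 + 1))
  symm := by
    constructor
    rintro ⟨x, m⟩ ⟨y, n⟩ (⟨h1, h2, h3⟩ | ⟨h1, h2⟩)
    · left
      refine ⟨h1.symm, by rwa [abs_sub_comm], ?_⟩
      rw [abs_sub_comm]
      simp only at h1 ⊢
      rw [← h1]
      exact h3
    · exact Or.inr ⟨h1.symm, h2.symm⟩
  loopless := by
    constructor
    rintro ⟨x, n⟩ (⟨_, h2, _⟩ | ⟨_, h2 | h2⟩) <;> simp_all

open Real

noncomputable def Fh (v : ℤ × ℕ) : UpperHalfPlane :=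
  UpperHalfPlane.mk ⟨(v.1 : ℝ), Real.exp v.2⟩ (Real.exp_pos _)
lemma Fh_im (v : ℤ × ℕ) : (Fh v).im = Real.exp (v.2 : ℝ) := rfl
lemma Fh_coe_re (v : ℤ × ℕ) : (Fh v : ℂ).re = (v.1 : ℝ) := rfl
lemma Fh_coe_im (v : ℤ × ℕ) : (Fh v : ℂ).im = Real.exp (v.2 : ℝ) := rfl

lemma vert_dist (x : ℤ) (n : ℕ) : dist (Fh (x, n)) (Fh (x, n + 1)) ≤ 1 := by
  rw [UpperHalfPlane.dist_le_iff_le_sinh]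
  have h1 : dist ((Fh (x, n)) : ℂ) ((Fh (x, n+1)) : ℂ)
      = dist (Real.exp (((x,n).2 : ℕ) : ℝ)) (Real.exp (((x,n+1).2 : ℕ) : ℝ)) := by
    rw [Complex.dist_of_re_eq (by rw [Fh_coe_re, Fh_coe_re]), Fh_coe_im, Fh_coe_im]
  rw [h1, Fh_im, Fh_im]
  have hc : (((x, n+1).2 : ℕ) : ℝ) = (n:ℝ) + 1 := by push_cast; ring
  have hc2 : (((x, n).2 : ℕ) : ℝ) = (n:ℝ) := by norm_num
  rw [hc, hc2]
  have h2 : √(Real.exp (n:ℝ) * Real.exp ((n:ℝ)+1)) = Real.exp (((n:ℝ) + ((n:ℝ)+1))/2) := by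
    rw [← Real.exp_add, Real.exp_half]
  rw [h2, Real.dist_eq, abs_of_nonpos (by simp [Real.exp_le_exp]), Real.sinh_eq]
  rw [div_le_div_iff₀ (by positivity) (by norm_num)]
  have key : (Real.exp ((n:ℝ)+1) - Real.exp (n:ℝ))
      = (Real.exp (1/2:ℝ) - Real.exp (-(1/2):ℝ)) * Real.exp (((n:ℝ) + ((n:ℝ)+1))/2) := by
    rw [sub_mul, ← Real.exp_add, ← Real.exp_add]; ring_nf
  linarith [key]

lemma horiz_dist (x y : ℤ) (n : ℕ) (h : ((|x - y| : ℤ) : ℝ) ≤ Real.exp (n:ℝ)) :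
    dist (Fh (x, n)) (Fh (y, n)) ≤ 1 := by
  rw [UpperHalfPlane.dist_le_iff_le_sinh]
  have h1 : dist ((Fh (x, n)) : ℂ) ((Fh (y, n)) : ℂ)
      = dist ((((x,n).1 : ℤ)) : ℝ) ((((y,n).1 : ℤ)) : ℝ) := by
    rw [Complex.dist_of_im_eq (by rw [Fh_coe_im, Fh_coe_im]), Fh_coe_re, Fh_coe_re]
  rw [h1, Fh_im, Fh_im]
  have hc : (((x,n).1 : ℤ) : ℝ) = (x:ℝ) := by norm_num
  have hc2 : (((y,n).1 : ℤ) : ℝ) = (y:ℝ) := by norm_num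
  have hc3 : (((x,n).2 : ℕ) : ℝ) = (n:ℝ) := by norm_num
  have hc4 : (((y,n).2 : ℕ) : ℝ) = (n:ℝ) := by norm_num
  rw [hc, hc2, hc3, hc4, Real.sqrt_mul_self (Real.exp_pos _).le, Real.dist_eq]
  have hd : |(x:ℝ) - (y:ℝ)| ≤ Real.exp (n:ℝ) := by push_cast at h ⊢; exact h
  have half : |(x:ℝ) - (y:ℝ)| / (2 * Real.exp (n:ℝ)) ≤ 1/2 := by
    rw [div_le_div_iff₀ (by positivity) (by norm_num)]
    nlinarith [Real.exp_pos (n:ℝ)]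
  calc |(x:ℝ) - (y:ℝ)| / (2 * Real.exp (n:ℝ)) ≤ 1/2 := half
    _ ≤ Real.sinh (1/2) := by rw [Real.self_le_sinh_iff]; norm_num

lemma lip {u v : ℤ × ℕ} (h : ZHoroball.Adj u v) : dist (Fh u) (Fh v) ≤ 1 := by
  obtain ⟨x, m⟩ := u; obtain ⟨y, n⟩ := v
  rcases h with ⟨h1, h2, h3⟩ | ⟨h1, h2 | h2⟩
  · simp only at h1 h2 h3
    subst h1
    exact horiz_dist x y m h3
  · simp only at h1 h2
    subst h1; subst h2
    rw [dist_comm]; exact vert_dist x n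
  · simp only at h1 h2
    subst h1; subst h2
    exact vert_dist x m

lemma walk_bound {u v : ℤ × ℕ} (p : ZHoroball.Walk u v) :
    dist (Fh u) (Fh v) ≤ (p.length : ℝ) := by
  induction p with
  | nil => simp
  | cons h q ih =>
    rename_i a b c
    calc dist (Fh a) (Fh c) ≤ dist (Fh a) (Fh b) + dist (Fh b) (Fh c) := dist_triangle _ _ _
      _ ≤ 1 + q.length := add_le_add (lip h) ih
      _ = ((SimpleGraph.Walk.cons h q).length : ℝ) := by
          rw [SimpleGraph.Walk.length_cons]; push_cast; ring

lemma step_adj (a : ℤ) : ZHoroball.Adj (a, 0) (a + 1, 0) := by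
  left
  have h1 : |a - (a + 1)| = 1 := by
    have : a - (a + 1) = -1 := by ring
    rw [this]; decide
  refine ⟨rfl, by rw [h1]; norm_num, ?_⟩
  simp only [h1]
  norm_num

lemma reach_nat (a : ℤ) (k : ℕ) : ZHoroball.Reachable (a, 0) (a + k, 0) := by
  induction k with
  | zero =>
    simp only [Nat.cast_zero, add_zero]
    exact SimpleGraph.Reachable.refl _
  | succ n ih =>
    refine ih.trans (SimpleGraph.Adj.reachable ?_)
    have := step_adj (a + n)
    convert this using 2 <;> push_cast <;> ring

lemma reach (a b : ℤ) : ZHoroball.Reachable (a, 0) (b, 0) := by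
  rcases le_total a b with h | h
  · have : b = a + ((b - a).toNat : ℤ) := by
      rw [Int.toNat_of_nonneg (by omega)]; ring
    rw [this]; exact reach_nat a _
  · have : a = b + ((a - b).toNat : ℤ) := by
      rw [Int.toNat_of_nonneg (by omega)]; ring
    rw [this]; exact (reach_nat b _).symm

/-- The graph distance between base vertices of the combinatorial horoball over `ℤ` is at
least `2·log|a − b| − 2`. -/
theorem stmt7 (a b : ℤ) (hab : a ≠ b) :
    2 * Real.log |(a : ℝ) - (b : ℝ)| - 2 ≤ (ZHoroball.dist (a, 0) (b, 0) : ℝ) := by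
  obtain ⟨p, hp⟩ := (reach a b).exists_walk_length_eq_dist
  have hwb : dist (Fh (a, 0)) (Fh (b, 0)) ≤ (ZHoroball.dist (a, 0) (b, 0) : ℝ) := by
    rw [← hp]; exact walk_bound p
  set D : ℝ := |(a : ℝ) - (b : ℝ)| with hDdef
  have hD1 : 1 ≤ D := by
    have h0 : (1 : ℤ) ≤ |a - b| := Int.one_le_abs (sub_ne_zero.mpr hab)
    have h1 : (1 : ℝ) ≤ ((|a - b| : ℤ) : ℝ) := by exact_mod_cast h0
    rw [hDdef]
    push_cast at h1
    exact h1
  have hdist : dist (Fh (a, 0)) (Fh (b, 0)) = 2 * Real.arsinh (D / 2) := by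
    rw [UpperHalfPlane.dist_eq]
    have h1 : dist ((Fh (a, 0)) : ℂ) ((Fh (b, 0)) : ℂ)
        = dist ((((a,(0:ℕ)).1 : ℤ)) : ℝ) ((((b,(0:ℕ)).1 : ℤ)) : ℝ) := by
      rw [Complex.dist_of_im_eq (by rw [Fh_coe_im, Fh_coe_im]), Fh_coe_re, Fh_coe_re]
    rw [h1, Fh_im, Fh_im]
    have hc : (((a,(0:ℕ)).1 : ℤ) : ℝ) = (a:ℝ) := by norm_num
    have hc2 : (((b,(0:ℕ)).1 : ℤ) : ℝ) = (b:ℝ) := by norm_num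
    have hc3 : (((a,(0:ℕ)).2 : ℕ) : ℝ) = (0:ℝ) := by norm_num
    have hc4 : (((b,(0:ℕ)).2 : ℕ) : ℝ) = (0:ℝ) := by norm_num
    rw [hc, hc2, hc3]
    norm_num [Real.exp_zero, Real.dist_eq, hDdef]
  have hlog : Real.log D ≤ Real.arsinh (D / 2) := by
    have hs : Real.sinh (Real.log D) = (D - D⁻¹) / 2 := Real.sinh_log (by linarith)
    have : Real.log D = Real.arsinh ((D - D⁻¹) / 2) := by rw [← hs, Real.arsinh_sinh]
    rw [this]
    apply Real.arsinh_le_arsinh.mpr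
    have : (0:ℝ) ≤ D⁻¹ := by positivity
    linarith
  calc 2 * Real.log D - 2 ≤ 2 * Real.arsinh (D / 2) := by linarith
    _ = dist (Fh (a, 0)) (Fh (b, 0)) := hdist.symm
    _ ≤ _ := hwb
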